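/- Suppose N is odd and let a be the smallest divisor of N other than 1 (i.e., the least prime factor of N). Then the samples of the PBL signal are uniquely identifiable up to an integer constant vector from the modulo samples if and only if N·(a−1)/(2a) ≥ P+1. -/

import Mathlib

open Finset Polynomial

def IsPBLSample (P N : ℕ) (y : Fin N → ℝ) : Prop :=
  ∃ c : ℤ → ℂ, (∀ p : ℤ, c (-p) = (starRingEnd ℂ) (c p)) ∧
    ∀ n : Fin N, (y n : ℂ) =
      ∑ p ∈ Finset.Icc (-(P : ℤ)) (P : ℤ),
        c p * Complex.exp (2 * Real.pi * Complex.I * (n : ℕ) * p / N)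

def PBLIdentifiable (P N : ℕ) : Prop :=
  ∀ y y' : Fin N → ℝ, IsPBLSample P N y → IsPBLSample P N y' →
    (∀ n : Fin N, ∃ k : ℤ, y n - y' n = k) →
    ∃ c : ℤ, ∀ n : Fin N, y n - y' n = c

lemma prim_pow_gcd {ω : ℂ} {N : ℕ} (hN : 0 < N) (hω : IsPrimitiveRoot ω N) (s : ℕ) :
    IsPrimitiveRoot (ω ^ s) (N / Nat.gcd s N) := by
  rcases Nat.eq_zero_or_pos s with rfl | hs
  · rw [Nat.gcd_zero_left, Nat.div_self hN, pow_zero]; exact IsPrimitiveRoot.one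
  · have hd : Nat.gcd s N ∣ N := Nat.gcd_dvd_right s N
    have h1 : IsPrimitiveRoot (ω ^ Nat.gcd s N) (N / Nat.gcd s N) :=
      hω.pow hN (Nat.mul_div_cancel' hd).symm
    have h2 : (s / Nat.gcd s N).Coprime (N / Nat.gcd s N) :=
      Nat.coprime_div_gcd_div_gcd (Nat.gcd_pos_of_pos_left N hs)
    have := h1.pow_of_coprime (s / Nat.gcd s N) h2
    rwa [← pow_mul, mul_comm, Nat.div_mul_cancel (Nat.gcd_dvd_left s N)] at this

lemma ortho {N : ℕ} (ζ : ℂ) (hζ : ζ ^ N = 1) :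
    ∑ n ∈ range N, ζ ^ n = if ζ = 1 then (N : ℂ) else 0 := by
  split_ifs with h
  · simp [h]
  · rw [geom_sum_eq h, hζ]; simp

lemma galois {q : ℕ} (hq : 0 < q) {μ₁ μ₂ : ℂ} (h1 : IsPrimitiveRoot μ₁ q)
    (h2 : IsPrimitiveRoot μ₂ q) (g : Polynomial ℚ) (hg : aeval μ₁ g = 0) :
    aeval μ₂ g = 0 := by
  have hdvd : minpoly ℚ μ₁ ∣ g := minpoly.dvd ℚ μ₁ hg
  rw [← Polynomial.cyclotomic_eq_minpoly_rat h1 hq,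
      Polynomial.cyclotomic_eq_minpoly_rat h2 hq] at hdvd
  obtain ⟨t, rfl⟩ := hdvd
  rw [map_mul, minpoly.aeval, zero_mul]

lemma gcd_sub_left (m N : ℕ) (h : m ≤ N) : Nat.gcd (N - m) N = Nat.gcd m N := by
  apply Nat.dvd_antisymm
  · exact Nat.dvd_gcd (by
      have h1 : Nat.gcd (N - m) N ∣ N - m := Nat.gcd_dvd_left _ _
      have h2 : Nat.gcd (N - m) N ∣ N := Nat.gcd_dvd_right _ _
      have := Nat.dvd_sub h2 h1
      rwa [Nat.sub_sub_self h] at this) (Nat.gcd_dvd_right _ _)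
  · exact Nat.dvd_gcd (Nat.dvd_sub (Nat.gcd_dvd_right _ _) (Nat.gcd_dvd_left _ _))
      (Nat.gcd_dvd_right _ _)

lemma key1 (P N : ℕ) (hN : 2 * P + 1 < N) (hodd : Odd N)
    (hdist : ∀ d : ℕ, d ∣ N → d < N → 2 * P < N - d) : PBLIdentifiable P N := by
  intro y y' hy hy' hkk
  obtain ⟨c, hc, hyc⟩ := hy
  obtain ⟨c', hc', hyc'⟩ := hy'
  choose k hk using hkk
  have hN0 : 0 < N := by omega
  set ω : ℂ := Complex.exp (2 * Real.pi * Complex.I / N) with hωdef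
  have hω : IsPrimitiveRoot ω N := Complex.isPrimitiveRoot_exp N hN0.ne'
  have hω0 : ω ≠ 0 := Complex.exp_ne_zero _
  have hωN : ω ^ (N : ℤ) = 1 := by rw [zpow_natCast]; exact hω.pow_eq_one
  have hexp : ∀ (n : ℕ) (p : ℤ),
      Complex.exp (2 * Real.pi * Complex.I * n * p / N) = ω ^ ((n : ℤ) * p) := by
    intro n p
    rw [hωdef, ← Complex.exp_int_mul]
    congr 1
    push_cast
    ring
  set b : ℤ → ℂ := fun p => c p - c' p with hbdef
  have hz : ∀ n : Fin N,
      (k n : ℂ) = ∑ p ∈ Finset.Icc (-(P:ℤ)) (P:ℤ), b p * ω ^ (((n:ℕ):ℤ) * p) := by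
    intro n
    calc (k n : ℂ) = ((y n : ℝ) : ℂ) - ((y' n : ℝ) : ℂ) := by
          rw [← Complex.ofReal_sub, hk n]; push_cast; ring
      _ = ∑ p ∈ Finset.Icc (-(P:ℤ)) (P:ℤ),
            b p * Complex.exp (2 * Real.pi * Complex.I * (n:ℕ) * p / N) := by
          rw [hyc n, hyc' n, ← Finset.sum_sub_distrib]
          exact Finset.sum_congr rfl fun p _ => (sub_mul _ _ _).symm
      _ = _ := Finset.sum_congr rfl fun p _ => by rw [hexp]
  set g : Polynomial ℚ := ∑ n : Fin N, Polynomial.C ((k n : ℚ)) * Polynomial.X ^ (n:ℕ)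
    with hgdef
  have hgev : ∀ μ : ℂ, Polynomial.aeval μ g = ∑ n : Fin N, (k n : ℂ) * μ ^ (n:ℕ) := by
    intro μ
    rw [hgdef, map_sum]
    refine Finset.sum_congr rfl fun n _ => ?_
    simp [Polynomial.aeval_C]
  have hT : ∀ m : ℤ, (∑ n : Fin N, (k n : ℂ) * (ω ^ (-m)) ^ (n : ℕ))
      = ∑ p ∈ Finset.Icc (-(P:ℤ)) (P:ℤ), b p * (if (N:ℤ) ∣ (p - m) then (N:ℂ) else 0) := by
    intro m
    calc (∑ n : Fin N, (k n : ℂ) * (ω ^ (-m)) ^ (n:ℕ))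
        = ∑ n : Fin N, ∑ p ∈ Finset.Icc (-(P:ℤ)) (P:ℤ),
            b p * (ω ^ (p - m)) ^ (n:ℕ) := by
          refine Finset.sum_congr rfl fun n _ => ?_
          rw [hz n, Finset.sum_mul]
          refine Finset.sum_congr rfl fun p _ => ?_
          rw [mul_assoc]
          congr 1
          rw [← zpow_natCast (ω ^ (-m)), ← zpow_natCast (ω ^ (p - m)), ← zpow_mul,
            ← zpow_mul, ← zpow_add₀ hω0]
          congr 1
          ring
      _ = ∑ p ∈ Finset.Icc (-(P:ℤ)) (P:ℤ), b p * ∑ n : Fin N, (ω ^ (p - m)) ^ (n:ℕ) := by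
          rw [Finset.sum_comm]
          exact Finset.sum_congr rfl fun p _ => (Finset.mul_sum _ _ _).symm
      _ = _ := by
          refine Finset.sum_congr rfl fun p _ => ?_
          congr 1
          have h1 : (ω ^ (p - m)) ^ N = 1 := by
            rw [← zpow_natCast, ← zpow_mul, mul_comm, zpow_mul, hωN, one_zpow]
          rw [Fin.sum_univ_eq_sum_range (fun i => (ω ^ (p - m)) ^ i), ortho _ h1]
          by_cases hd : (N:ℤ) ∣ (p - m)
          · rw [if_pos hd, if_pos ((hω.zpow_eq_one_iff_dvd _).mpr hd)]
          · rw [if_neg hd, if_neg (fun h => hd ((hω.zpow_eq_one_iff_dvd _).mp h))]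
  -- step A: b p = 0 for p ≠ 0 in the window
  have hb0 : ∀ p ∈ Finset.Icc (-(P:ℤ)) (P:ℤ), p ≠ 0 → b p = 0 := by
    intro p hpmem hp0
    by_contra hbp
    rw [Finset.mem_Icc] at hpmem
    set d : ℕ := Int.gcd p N with hddef
    have hdN : d ∣ N := Int.natCast_dvd_natCast.mp (hddef ▸ Int.gcd_dvd_right _ _)
    have hpabs : p.natAbs ≤ P := by omega
    have hdp : d ∣ p.natAbs := by
      rw [hddef, Int.gcd]
      exact Nat.gcd_dvd_left _ _
    have hd0 : 0 < d := hddef ▸ Int.gcd_pos_of_ne_zero_left (N:ℤ) hp0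
    have hdP : d ≤ P := le_trans (Nat.le_of_dvd (Int.natAbs_pos.mpr hp0) hdp) hpabs
    have hdltN : d < N := by omega
    have hNd : 2 * P < N - d := hdist d hdN hdltN
    have hdodd : Odd d := hodd.of_dvd_nat hdN
    set q : ℕ := N / d with hqdef
    have hqd : d * q = N := Nat.mul_div_cancel' hdN
    have hq1 : 1 < q := by
      rcases Nat.lt_or_ge q 2 with h | h
      · interval_cases q <;> omega
      · omega
    have hq0 : 0 < q := by omega
    have hqodd : Odd q := hodd.of_dvd_nat ⟨d, by rw [← hqd]; ring⟩
    set u : ℕ := (q - 1) / 2 with hudef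
    have hu2 : 2 * u = q - 1 := by
      rcases hqodd with ⟨t, ht⟩; omega
    set m : ℕ := d * u with hmdef
    have hm2 : 2 * m = N - d := by
      have h3 : 2 * (d * u) = d * (2 * u) := by ring
      rw [hmdef, h3, hu2, Nat.mul_sub, hqd, mul_one]
    have hmP : P < m := by omega
    have hmaxN : m + P < N := by omega
    have hmN : m ≤ N := by omega
    have hgcdu : Nat.gcd u q = 1 := by
      have h2 : Nat.gcd u q ∣ q := Nat.gcd_dvd_right _ _
      have h3 : Nat.gcd u q ∣ q - 1 := dvd_trans (Nat.gcd_dvd_left _ _) ⟨2, by omega⟩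
      have h4 := Nat.dvd_sub h2 h3
      have h5 : q - (q - 1) = 1 := by omega
      rw [h5] at h4
      exact Nat.dvd_one.mp h4
    have hgcdm : Nat.gcd m N = d := by
      rw [hmdef, ← hqd, Nat.gcd_mul_left, hgcdu, mul_one]
    have hTm : ∑ p' ∈ Finset.Icc (-(P:ℤ)) (P:ℤ),
        b p' * (if (N:ℤ) ∣ (p' - (m:ℤ)) then (N:ℂ) else 0) = 0 := by
      apply Finset.sum_eq_zero
      intro p' hp'
      rw [Finset.mem_Icc] at hp'
      rw [if_neg, mul_zero]
      intro hdvd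
      have h5 : (N:ℤ) ∣ ((m:ℤ) - p') := by
        have := dvd_neg.mpr hdvd
        rwa [neg_sub] at this
      have h6 : (0:ℤ) < (m:ℤ) - p' := by omega
      have h7 := Int.le_of_dvd h6 h5
      omega
    have hμ1 : ω ^ (-(m:ℤ)) = ω ^ (N - m) := by
      have he : (-(m:ℤ)) = ((N - m : ℕ) : ℤ) - (N:ℤ) := by omega
      rw [he, zpow_sub₀ hω0, hωN, div_one, zpow_natCast]
    have hgcdNm : Nat.gcd (N - m) N = d := by rw [gcd_sub_left m N hmN, hgcdm]
    have hprim1 : IsPrimitiveRoot (ω ^ (N - m)) q := by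
      have h9 := prim_pow_gcd hN0 hω (N - m)
      rwa [hgcdNm, ← hqdef] at h9
    have haev1 : Polynomial.aeval (ω ^ (N - m)) g = 0 := by
      rw [← hμ1, hgev, hT (m:ℤ), hTm]
    -- second primitive root from p
    obtain ⟨s, hs1, hs2⟩ : ∃ s : ℕ, ω ^ (-p) = ω ^ s ∧ Nat.gcd s N = d := by
      have habs : Nat.gcd p.natAbs N = d := by rw [hddef, Int.gcd]; simp
      rcases lt_or_gt_of_ne hp0 with hneg | hpos
      · refine ⟨p.natAbs, ?_, habs⟩
        have : (-p) = ((p.natAbs : ℕ) : ℤ) := by omega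
        rw [this, zpow_natCast]
      · refine ⟨N - p.natAbs, ?_, by rw [gcd_sub_left _ _ (by omega), habs]⟩
        have he : (-p) = ((N - p.natAbs : ℕ) : ℤ) - (N:ℤ) := by omega
        rw [he, zpow_sub₀ hω0, hωN, div_one, zpow_natCast]
    have hprim2 : IsPrimitiveRoot (ω ^ s) q := by
      have h9 := prim_pow_gcd hN0 hω s
      rwa [hs2, ← hqdef] at h9
    have haev2 : Polynomial.aeval (ω ^ s) g = 0 :=
      galois hq0 hprim1 hprim2 g haev1
    rw [← hs1, hgev, hT p] at haev2
    have hTp : ∑ p' ∈ Finset.Icc (-(P:ℤ)) (P:ℤ),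
        b p' * (if (N:ℤ) ∣ (p' - p) then (N:ℂ) else 0) = (N:ℂ) * b p := by
      rw [Finset.sum_eq_single p]
      · rw [sub_self, if_pos (dvd_zero _), mul_comm]
      · intro p'' hmem hne
        rw [Finset.mem_Icc] at hmem
        rw [if_neg, mul_zero]
        intro hdvd
        have h8 : (N:ℤ) ≤ |p'' - p| :=
          Int.le_of_dvd (abs_pos.mpr (sub_ne_zero.mpr hne)) ((dvd_abs _ _).mpr hdvd)
        rcases abs_cases (p'' - p) with ⟨h9, _⟩ | ⟨h9, _⟩ <;> omega
      · intro hnot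
        exact absurd (Finset.mem_Icc.mpr hpmem) hnot
    rw [hTp] at haev2
    have : b p = 0 := by
      have hNc : (N:ℂ) ≠ 0 := Nat.cast_ne_zero.mpr hN0.ne'
      rcases mul_eq_zero.mp haev2 with h | h
      · exact absurd h hNc
      · exact h
    exact hbp this
  -- step B: conclude
  have hconst : ∀ n : Fin N, (k n : ℂ) = b 0 := by
    intro n
    rw [hz n, Finset.sum_eq_single 0]
    · simp
    · intro p hpmem hne
      rw [hb0 p hpmem hne, zero_mul]
    · intro h
      exact absurd (Finset.mem_Icc.mpr ⟨by omega, by omega⟩) h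
  refine ⟨k ⟨0, hN0⟩, fun n => ?_⟩
  rw [hk n]
  have h10 := (hconst n).trans (hconst ⟨0, hN0⟩).symm
  exact_mod_cast h10

lemma ortho_zpow (ξ : ℂ) (hξ0 : ξ ≠ 0) (h : ℕ) (hξ : ξ ^ (2 * h + 1) = 1) :
    ∑ j ∈ Finset.Icc (-(h:ℤ)) (h:ℤ), ξ ^ j
      = if ξ = 1 then ((2 * h + 1 : ℕ) : ℂ) else 0 := by
  have hre : ∑ j ∈ Finset.Icc (-(h:ℤ)) (h:ℤ), ξ ^ j
      = ∑ i ∈ Finset.range (2 * h + 1), ξ ^ (-(h:ℤ)) * ξ ^ i := by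
    refine Finset.sum_nbij' (fun j => (j + h).toNat) (fun i => (i : ℤ) - h)
      ?_ ?_ ?_ ?_ ?_
    · intro j hj
      rw [Finset.mem_Icc] at hj
      rw [Finset.mem_range]
      omega
    · intro i hi
      rw [Finset.mem_range] at hi
      rw [Finset.mem_Icc]
      omega
    · intro j hj
      rw [Finset.mem_Icc] at hj
      omega
    · intro i hi
      rw [Finset.mem_range] at hi
      omega
    · intro j hj
      rw [Finset.mem_Icc] at hj
      rw [← zpow_natCast ξ ((j + h).toNat), ← zpow_add₀ hξ0]
      congr 1
      omega
  rw [hre, ← Finset.mul_sum, ortho _ hξ]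
  split_ifs with h1
  · simp [h1]
  · simp

lemma key2 (P N a : ℕ) (hP : 1 ≤ P) (hN : 2 * P + 1 < N) (hodd : Odd N)
    (ha : a = N.minFac) (hM : (N / a) * ((a - 1) / 2) ≤ P) : ¬ PBLIdentifiable P N := by
  have hN1 : 1 < N := by omega
  have haprime : a.Prime := ha ▸ Nat.minFac_prime (by omega)
  have haN : a ∣ N := ha ▸ Nat.minFac_dvd N
  have haodd : Odd a := hodd.of_dvd_nat haN
  have ha3 : 3 ≤ a := by
    rcases lt_or_eq_of_le haprime.two_le with hlt | heq
    · omega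
    · exfalso; rcases haodd with ⟨t, ht⟩; omega
  set r : ℕ := N / a with hrdef
  have hra : a * r = N := Nat.mul_div_cancel' haN
  have hr0 : 0 < r := by
    rcases Nat.eq_zero_or_pos r with hh | hh
    · exfalso; rw [hh, mul_zero] at hra; omega
    · exact hh
  set h : ℕ := (a - 1) / 2 with hhdef
  have hh2 : 2 * h = a - 1 := by rcases haodd with ⟨t, ht⟩; omega
  have hMP : h * r ≤ P := by rw [mul_comm]; exact hM
  have hhr : P < (h + 1) * r := by
    have e4 : 2 * ((h + 1) * r) = N + r := by
      have e1 : 2 * ((h + 1) * r) = (2 * h + 2) * r := by ring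
      have e2 : 2 * h + 2 = a + 1 := by omega
      have e3 : (a + 1) * r = a * r + r := by ring
      rw [e1, e2, e3, hra]
    omega
  have hN0 : 0 < N := by omega
  set ω : ℂ := Complex.exp (2 * Real.pi * Complex.I / N) with hωdef
  have hω : IsPrimitiveRoot ω N := Complex.isPrimitiveRoot_exp N hN0.ne'
  have hω0 : ω ≠ 0 := Complex.exp_ne_zero _
  have hexp : ∀ (n : ℕ) (p : ℤ),
      Complex.exp (2 * Real.pi * Complex.I * n * p / N) = ω ^ ((n : ℤ) * p) := by
    intro n p
    rw [hωdef, ← Complex.exp_int_mul]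
    congr 1
    push_cast
    ring
  set y : Fin N → ℝ := fun n => if a ∣ (n : ℕ) then (a : ℝ) - 1 else -1 with hydef
  intro hid
  have hy' : IsPBLSample P N (fun _ => 0) := ⟨0, by simp, by simp⟩
  have hy : IsPBLSample P N y := by
    refine ⟨fun p => if p ≠ 0 ∧ (r : ℤ) ∣ p then 1 else 0, ?_, ?_⟩
    · intro p
      dsimp only
      by_cases hcond : p ≠ 0 ∧ (r : ℤ) ∣ p
      · rw [if_pos hcond, if_pos ⟨by omega, (dvd_neg).mpr hcond.2⟩, map_one]
      · rw [if_neg hcond, if_neg (fun hcc => hcond ⟨by omega, (dvd_neg).mp hcc.2⟩), map_zero]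
    · intro n
      have hstep1 : ∑ p ∈ Finset.Icc (-(P : ℤ)) (P : ℤ),
          (if p ≠ 0 ∧ (r : ℤ) ∣ p then (1 : ℂ) else 0)
            * Complex.exp (2 * Real.pi * Complex.I * (n : ℕ) * p / N)
          = ∑ p ∈ (Finset.Icc (-(P : ℤ)) (P : ℤ)).filter (fun p => p ≠ 0 ∧ (r : ℤ) ∣ p),
              ω ^ (((n : ℕ) : ℤ) * p) := by
        rw [Finset.sum_filter]
        refine Finset.sum_congr rfl fun p _ => ?_
        rw [hexp]
        by_cases hc : p ≠ 0 ∧ (r : ℤ) ∣ p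
        · rw [if_pos hc, if_pos hc, one_mul]
        · rw [if_neg hc, if_neg hc, zero_mul]
      have hsetq : (Finset.Icc (-(P : ℤ)) (P : ℤ)).filter (fun p => p ≠ 0 ∧ (r : ℤ) ∣ p)
          = ((Finset.Icc (-(h : ℤ)) (h : ℤ)).erase 0).image (fun j : ℤ => j * (r:ℤ)) := by
        ext x
        simp only [Finset.mem_filter, Finset.mem_Icc, Finset.mem_image, Finset.mem_erase]
        constructor
        · rintro ⟨⟨hx1, hx2⟩, hx0, j, rfl⟩
          have hj0 : j ≠ 0 := by rintro rfl; simp at hx0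
          have hxabs : ((r : ℤ) * j).natAbs = j.natAbs * r := by
            rw [Int.natAbs_mul]; simp [mul_comm]
          have hjb : j.natAbs ≤ h := by
            by_contra hcc
            push_neg at hcc
            have hmul1 : (h + 1) * r ≤ j.natAbs * r :=
              Nat.mul_le_mul_right r (by omega)
            omega
          exact ⟨j, ⟨hj0, by omega, by omega⟩, by ring⟩
        · rintro ⟨j, ⟨hj0, hjl, hju⟩, rfl⟩
          have hxabs : (j * (r : ℤ)).natAbs = j.natAbs * r := by
            rw [Int.natAbs_mul]; simp
          have hmul1 : j.natAbs * r ≤ h * r := Nat.mul_le_mul_right r (by omega)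
          refine ⟨⟨by omega, by omega⟩, ?_, Dvd.intro_left j rfl⟩
          intro hzz
          rw [mul_eq_zero] at hzz
          rcases hzz with hzz | hzz
          · exact hj0 hzz
          · exact (by exact_mod_cast hr0.ne' : (r : ℤ) ≠ 0) hzz
      have hinj : ∀ x₁ ∈ (Finset.Icc (-(h : ℤ)) (h : ℤ)).erase 0,
          ∀ x₂ ∈ (Finset.Icc (-(h : ℤ)) (h : ℤ)).erase 0,
          x₁ * (r : ℤ) = x₂ * (r : ℤ) → x₁ = x₂ := fun x₁ _ x₂ _ hxy =>
        mul_right_cancel₀ (by exact_mod_cast hr0.ne' : (r : ℤ) ≠ 0) hxy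
      set ξ : ℂ := ω ^ ((n : ℕ) * r) with hξdef
      have hξ0 : ξ ≠ 0 := pow_ne_zero _ hω0
      have hξrw : ∀ j : ℤ, ω ^ (((n : ℕ) : ℤ) * (j * r)) = ξ ^ j := by
        intro j
        rw [hξdef, ← zpow_natCast ω ((n : ℕ) * r), ← zpow_mul]
        congr 1
        push_cast
        ring
      have hξa : ξ ^ (2 * h + 1) = 1 := by
        have e1 : 2 * h + 1 = a := by omega
        rw [hξdef, ← pow_mul, e1]
        have e2 : ∀ nn : ℕ, nn * r * a = N * nn := fun nn => by rw [← hra]; ring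
        rw [e2, pow_mul, hω.pow_eq_one, one_pow]
      have hξ1 : ξ = 1 ↔ a ∣ (n : ℕ) := by
        rw [hξdef, hω.pow_eq_one_iff_dvd]
        constructor
        · rintro ⟨t, ht⟩
          refine ⟨t, ?_⟩
          have he : (n : ℕ) * r = a * t * r := by rw [ht, ← hra]; ring
          exact Nat.eq_of_mul_eq_mul_right hr0 he
        · rintro ⟨t, ht⟩
          exact ⟨t, by rw [ht, ← hra]; ring⟩
      have hsum : ∑ j ∈ (Finset.Icc (-(h : ℤ)) (h : ℤ)).erase 0, ξ ^ j
          = (if ξ = 1 then ((2 * h + 1 : ℕ) : ℂ) else 0) - 1 := by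
        rw [← ortho_zpow ξ hξ0 h hξa,
          Finset.sum_erase_eq_sub (Finset.mem_Icc.mpr ⟨by omega, by omega⟩)]
        norm_num
      rw [hstep1, hsetq, Finset.sum_image hinj]
      have : ∑ j ∈ (Finset.Icc (-(h : ℤ)) (h : ℤ)).erase 0, ω ^ (((n : ℕ) : ℤ) * (j * r))
          = ∑ j ∈ (Finset.Icc (-(h : ℤ)) (h : ℤ)).erase 0, ξ ^ j :=
        Finset.sum_congr rfl fun j _ => hξrw j
      rw [this, hsum]
      by_cases hdn : a ∣ (n : ℕ)
      · rw [if_pos ((hξ1).mpr hdn), hydef]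
        simp only [hdn, if_pos]
        have : (2 * h + 1 : ℕ) = a := by omega
        rw [this]
        push_cast
        ring
      · rw [if_neg (fun hh1 => hdn ((hξ1).mp hh1)), hydef]
        simp only [hdn, if_neg, if_false]
        push_cast
        ring
  obtain ⟨cc, hcc⟩ := hid y (fun _ => 0) hy hy' (fun n => by
    by_cases hd : a ∣ (n : ℕ)
    · exact ⟨(a : ℤ) - 1, by simp [hydef, hd]⟩
    · exact ⟨-1, by simp [hydef, hd]⟩)
  have h0 := hcc ⟨0, hN0⟩
  have h1 := hcc ⟨1, hN1⟩
  have hd0 : a ∣ ((⟨0, hN0⟩ : Fin N) : ℕ) := ⟨0, by simp⟩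
  have hd1 : ¬ a ∣ ((⟨1, hN1⟩ : Fin N) : ℕ) := by
    simp only [Fin.val_mk]
    intro hdd
    have := Nat.le_of_dvd one_pos hdd
    omega
  have e0 : y ⟨0, hN0⟩ = (a : ℝ) - 1 := by rw [hydef]; simp [hd0]
  have e1 : y ⟨1, hN1⟩ = -1 := by rw [hydef]; simp [hd1]
  rw [e0] at h0
  rw [e1] at h1
  have hacast : (3 : ℝ) ≤ (a : ℝ) := by exact_mod_cast ha3
  linarith

theorem stmt16 (P N a : ℕ) (hP : 1 ≤ P) (hN : 2 * P + 1 < N) (hodd : Odd N)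
    (ha : a = N.minFac) :
    PBLIdentifiable P N ↔
      (P : ℝ) + 1 ≤ (N : ℝ) * ((a : ℝ) - 1) / (2 * (a : ℝ)) := by
  have hN1 : 1 < N := by omega
  have haprime : a.Prime := ha ▸ Nat.minFac_prime (by omega)
  have haN : a ∣ N := ha ▸ Nat.minFac_dvd N
  have haodd : Odd a := hodd.of_dvd_nat haN
  have ha3 : 3 ≤ a := by
    rcases lt_or_eq_of_le haprime.two_le with hlt | heq
    · omega
    · exfalso; rcases haodd with ⟨t, ht⟩; omega
  set r : ℕ := N / a with hrdef
  have hra : a * r = N := Nat.mul_div_cancel' haN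
  have hr0 : 0 < r := by
    rcases Nat.eq_zero_or_pos r with hh | hh
    · exfalso; rw [hh, mul_zero] at hra; omega
    · exact hh
  set h : ℕ := (a - 1) / 2 with hhdef
  have hh2 : 2 * h = a - 1 := by rcases haodd with ⟨t, ht⟩; omega
  have hnat : N * (a - 1) = 2 * a * (r * h) := by
    have e1 : 2 * a * (r * h) = (a * r) * (2 * h) := by ring
    rw [e1, hra, hh2]
  have hreal : (N : ℝ) * ((a : ℝ) - 1) / (2 * (a : ℝ)) = ((r * h : ℕ) : ℝ) := by
    rw [div_eq_iff (by positivity : (2 * (a : ℝ)) ≠ 0)]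
    have : ((N * (a - 1) : ℕ) : ℝ) = ((2 * a * (r * h) : ℕ) : ℝ) := by rw [hnat]
    push_cast [Nat.cast_sub (by omega : 1 ≤ a)] at this ⊢
    linear_combination this
  rw [hreal]
  constructor
  · intro hid
    by_contra hlt
    push_neg at hlt
    have hM : (N / a) * ((a - 1) / 2) ≤ P := by
      show r * h ≤ P
      have h2 : ((r * h : ℕ) : ℝ) < (P : ℝ) + 1 := hlt
      have h3 : r * h < P + 1 := by exact_mod_cast h2
      omega
    exact key2 P N a hP hN hodd ha hM hid
  · intro hle
    have hPM : P + 1 ≤ r * h := by exact_mod_cast hle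
    apply key1 P N hN hodd
    intro d hdN hdltN
    set q : ℕ := N / d with hqdef
    have hd0 : 0 < d := by
      rcases Nat.eq_zero_or_pos d with hh | hh
      · exfalso; rw [hh] at hdN hdltN; omega
      · exact hh
    have hdq : d * q = N := Nat.mul_div_cancel' hdN
    have hq2 : 2 ≤ q := by
      rcases Nat.lt_or_ge q 2 with hh | hh
      · interval_cases q <;> omega
      · exact hh
    have haq : a ≤ q := by
      rw [ha]
      exact Nat.minFac_le_of_dvd hq2 ⟨d, by rw [← hdq]; ring⟩
    have hdr : d ≤ r := by
      have h1 : a * d ≤ d * q := by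
        rw [mul_comm a d]
        exact Nat.mul_le_mul_left d haq
      rw [hdq, ← hra] at h1
      exact Nat.le_of_mul_le_mul_left h1 (by omega)
    have hNr : 2 * (r * h) + r = N := by
      have e1 : 2 * (r * h) + r = (2 * h + 1) * r := by ring
      have e2 : 2 * h + 1 = a := by omega
      rw [e1, e2, hra]
    omega
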